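/- (One-step recursion for time-varying tracking.) Let Y = ∏_{i=1}^d [l_i, u_i] ⊂ ℝ^d be a nonempty box, and let F, G : ℝ^d → ℝ be differentiable functions on Y (G the current objective, F the previous one) such that: F has a coordinate-wise quadratic upper bound with constant L > 0 on Y and satisfies the proximal Polyak–Łojasiewicz inequality on Y with constant σ > 0 and attained optimal value F*; G attains the same optimal value G* = F* on Y; and sup_{ξ ∈ Y} |G(ξ) − F(ξ)| ≤ e for some e ≥ 0. Then for every ξ ∈ Y, with ξ^{+,i} the coordinate prox-step of F at ξ in coordinate i with step constant L, (1/d) Σ_{i=1}^d G(ξ^{+,i}) − G* ≤ (1 − σ/(dL)) (F(ξ) − F*) + e. -/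

import Mathlib

/-- Membership in the box `Y = ∏_i [l_i, u_i] ⊂ ℝ^d`. -/
def InBox {d : ℕ} (l u ξ : Fin d → ℝ) : Prop := ∀ i, ξ i ∈ Set.Icc (l i) (u i)

/-- The `i`-th partial derivative `∂_i F` of `F : ℝ^d → ℝ` at `ξ`. -/
noncomputable def pd {d : ℕ} (F : (Fin d → ℝ) → ℝ) (ξ : Fin d → ℝ) (i : Fin d) : ℝ :=
  deriv (fun t : ℝ => F (Function.update ξ i t)) (ξ i)

/-- `F` has a coordinate-wise quadratic upper bound with constant `L` on the box:
`F(ξ + α e_i) ≤ F(ξ) + α ∂_i F(ξ) + (L/2) α²` whenever `ξ` and `ξ + α e_i` lie in the box. -/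
def CoordQuadUB {d : ℕ} (F : (Fin d → ℝ) → ℝ) (L : ℝ) (l u : Fin d → ℝ) : Prop :=
  ∀ ξ, InBox l u ξ → ∀ i : Fin d, ∀ α : ℝ, InBox l u (Function.update ξ i (ξ i + α)) →
    F (Function.update ξ i (ξ i + α)) ≤ F ξ + α * pd F ξ i + L / 2 * α ^ 2

/-- `ξ'` is the coordinate prox-step of `F` at `ξ` in coordinate `i` with step constant `L`:
`ξ' = ξ + α e_i` where `α` minimizes `α ∂_i F(ξ) + (L/2) α²` subject to `ξ_i + α ∈ [l_i, u_i]`. -/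
def IsProxStep {d : ℕ} (F : (Fin d → ℝ) → ℝ) (L : ℝ) (l u ξ : Fin d → ℝ) (i : Fin d)
    (ξ' : Fin d → ℝ) : Prop :=
  ∃ α : ℝ, ξ' = Function.update ξ i (ξ i + α) ∧ ξ i + α ∈ Set.Icc (l i) (u i) ∧
    ∀ β : ℝ, ξ i + β ∈ Set.Icc (l i) (u i) →
      α * pd F ξ i + L / 2 * α ^ 2 ≤ β * pd F ξ i + L / 2 * β ^ 2

/-- The forward-step quantity
`D(ξ, α) = −2α · inf_{ξ' ∈ Y} [⟨∇F(ξ), ξ' − ξ⟩ + (α/2)‖ξ' − ξ‖²]`. -/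
noncomputable def Dfwd {d : ℕ} (F : (Fin d → ℝ) → ℝ) (l u ξ : Fin d → ℝ) (α : ℝ) : ℝ :=
  -2 * α * sInf {v : ℝ | ∃ ξ', InBox l u ξ' ∧
    v = (∑ i, pd F ξ i * (ξ' i - ξ i)) + α / 2 * ∑ i, (ξ' i - ξ i) ^ 2}

/-- The proximal Polyak–Łojasiewicz inequality on the box with constant `σ` and optimal
value `Fstar`: `(1/2) D(ξ, L) ≥ σ (F(ξ) − F*)` for all `ξ` in the box. -/
def ProxPL {d : ℕ} (F : (Fin d → ℝ) → ℝ) (L : ℝ) (l u : Fin d → ℝ) (σ Fstar : ℝ) : Prop :=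
  ∀ ξ, InBox l u ξ → (1 / 2) * Dfwd F l u ξ L ≥ σ * (F ξ - Fstar)

/-- one-step recursion for time-varying tracking: if `F` (previous objective)
satisfies the quadratic upper bound and prox-PL with attained optimum `F*`, `G` (current
objective) attains the same optimum `G* = F*`, and `sup_Y |G − F| ≤ e`, then one uniformly
random coordinate prox-step of `F` gives
`(1/d) Σ_i G(ξ^{+,i}) − G* ≤ (1 − σ/(dL))(F(ξ) − F*) + e`. -/
theorem stmt7 {d : ℕ} (hd : 0 < d) (l u : Fin d → ℝ) (hlu : ∀ i, l i ≤ u i)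
    (F G : (Fin d → ℝ) → ℝ) (hF : Differentiable ℝ F) (hG : Differentiable ℝ G)
    (L σ Fstar Gstar e : ℝ) (hL : 0 < L) (hσ : 0 < σ) (he : 0 ≤ e)
    (hquad : CoordQuadUB F L l u)
    (hFstar : Fstar = sInf {v : ℝ | ∃ ξ, InBox l u ξ ∧ v = F ξ})
    (hFatt : ∃ ξs, InBox l u ξs ∧ F ξs = Fstar)
    (hPL : ProxPL F L l u σ Fstar)
    (hGstar : Gstar = sInf {v : ℝ | ∃ ξ, InBox l u ξ ∧ v = G ξ})
    (hGatt : ∃ ξs, InBox l u ξs ∧ G ξs = Gstar)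
    (hsame : Gstar = Fstar)
    (hclose : ∀ ξ, InBox l u ξ → |G ξ - F ξ| ≤ e)
    (ξ : Fin d → ℝ) (hξ : InBox l u ξ)
    (ξplus : Fin d → (Fin d → ℝ))
    (hplus : ∀ i, IsProxStep F L l u ξ i (ξplus i)) :
    (1 / (d : ℝ)) * ∑ i, G (ξplus i) - Gstar ≤ (1 - σ / (d * L)) * (F ξ - Fstar) + e := by
  classical
  choose α hα hαmem hαmin using hplus
  set c : Fin d → ℝ := pd F ξ with hc
  set m : Fin d → ℝ := fun i => α i * c i + L / 2 * (α i) ^ 2 with hm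
  have hd' : (0:ℝ) < d := by exact_mod_cast hd
  -- prox steps stay in the box
  have hbox : ∀ i, InBox l u (ξplus i) := by
    intro i j
    rw [hα i, Function.update_apply]
    split
    · next h => subst h; exact hαmem _
    · exact hξ j
  -- quadratic upper bound on each prox step
  have hFstep : ∀ i, F (ξplus i) ≤ F ξ + m i := by
    intro i
    have h := hquad ξ hξ i (α i) (by rw [← hα i]; exact hbox i)
    rw [← hα i] at h
    simp only [← hc] at h
    show F (ξplus i) ≤ F ξ + (α i * c i + L / 2 * (α i) ^ 2)
    linarith
  -- the inf set
  set S : Set ℝ := {v : ℝ | ∃ ξ', InBox l u ξ' ∧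
    v = (∑ i, c i * (ξ' i - ξ i)) + L / 2 * ∑ i, (ξ' i - ξ i) ^ 2} with hS
  have hSne : S.Nonempty :=
    ⟨(∑ i, c i * (ξ i - ξ i)) + L / 2 * ∑ i, (ξ i - ξ i) ^ 2, ξ, hξ, rfl⟩
  have hlb : ∀ v ∈ S, (∑ i, m i) ≤ v := by
    rintro v ⟨ξ', hξ', rfl⟩
    have hterm : ∀ i ∈ Finset.univ, m i ≤ c i * (ξ' i - ξ i) + L / 2 * (ξ' i - ξ i) ^ 2 := by
      intro i _
      have h := hαmin i (ξ' i - ξ i) (by simpa using hξ' i)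
      simp only [hm]
      nlinarith [h]
    calc (∑ i, m i) ≤ ∑ i, (c i * (ξ' i - ξ i) + L / 2 * (ξ' i - ξ i) ^ 2) :=
          Finset.sum_le_sum hterm
      _ = (∑ i, c i * (ξ' i - ξ i)) + L / 2 * ∑ i, (ξ' i - ξ i) ^ 2 := by
          rw [Finset.sum_add_distrib, Finset.mul_sum]
  have hkey : (∑ i, m i) ≤ sInf S := le_csInf hSne hlb
  -- prox-PL
  have hPL' := hPL ξ hξ
  rw [Dfwd] at hPL'
  have hPL'' : -L * sInf S ≥ σ * (F ξ - Fstar) := by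
    have : sInf {v : ℝ | ∃ ξ', InBox l u ξ' ∧
        v = (∑ i, pd F ξ i * (ξ' i - ξ i)) + L / 2 * ∑ i, (ξ' i - ξ i) ^ 2} = sInf S := by
      rw [hS, hc]
    rw [this] at hPL'
    linarith
  have hLm : L * (∑ i, m i) ≤ -(σ * (F ξ - Fstar)) := by
    nlinarith [mul_le_mul_of_nonneg_left hkey hL.le]
  -- sum bounds
  have hsumF : (∑ i, F (ξplus i)) ≤ (d : ℝ) * F ξ + ∑ i, m i := by
    calc (∑ i, F (ξplus i)) ≤ ∑ i, (F ξ + m i) := Finset.sum_le_sum (fun i _ => hFstep i)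
      _ = (d : ℝ) * F ξ + ∑ i, m i := by
          rw [Finset.sum_add_distrib, Finset.sum_const, Finset.card_univ, Fintype.card_fin,
            nsmul_eq_mul]
  have hsumG : (∑ i, G (ξplus i)) ≤ (∑ i, F (ξplus i)) + (d : ℝ) * e := by
    calc (∑ i, G (ξplus i)) ≤ ∑ i, (F (ξplus i) + e) := by
          refine Finset.sum_le_sum (fun i _ => ?_)
          have := hclose (ξplus i) (hbox i)
          have := abs_le.mp this
          linarith [this.2]
      _ = (∑ i, F (ξplus i)) + (d : ℝ) * e := by
          rw [Finset.sum_add_distrib, Finset.sum_const, Finset.card_univ, Fintype.card_fin,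
            nsmul_eq_mul]
  -- final arithmetic
  rw [hsame]
  have hkey2 : L * (∑ i, G (ξplus i)) ≤ (d : ℝ) * L * F ξ - σ * (F ξ - Fstar) + (d : ℝ) * L * e := by
    nlinarith [mul_le_mul_of_nonneg_left hsumG hL.le, mul_le_mul_of_nonneg_left hsumF hL.le, hLm]
  rw [← mul_le_mul_iff_of_pos_left (mul_pos hd' hL)]
  have hd0 : (d : ℝ) ≠ 0 := hd'.ne'
  have hL0 : L ≠ 0 := hL.ne'
  have e1 : (d : ℝ) * L * ((1 / (d : ℝ)) * ∑ i, G (ξplus i) - Fstar)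
      = L * (∑ i, G (ξplus i)) - (d : ℝ) * L * Fstar := by
    field_simp
  have e2 : (d : ℝ) * L * ((1 - σ / ((d : ℝ) * L)) * (F ξ - Fstar) + e)
      = (d : ℝ) * L * (F ξ - Fstar) - σ * (F ξ - Fstar) + (d : ℝ) * L * e := by
    field_simp
  rw [e1, e2]
  linarith [hkey2]
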